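/- arXiv:2211.02974 — 3 statements merged into one kernel-verified Lean document; each statement's English description precedes it below -/
import Mathlib

section
/- Let (B,S) be an S5-subordination algebra, NI(B) its set of normal round ideals, and define Q : B → NI(B) by a Q I iff a ∈ I. Then Q is a compatible subordination from (B,S) to the de Vries algebra (NI(B), ≺), i.e., Q is a subordination with ≺ ∘ Q = Q = Q ∘ S. -/
open Set

/-- Image of a set under a relation: `S[X] = {b | ∃ x ∈ X, x S b}`. -/
def relImg {B₁ B₂ : Type*} (S : B₁ → B₂ → Prop) (X : Set B₁) : Set B₂ :=
  {b | ∃ x ∈ X, S x b}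

/-- Preimage of a set under a relation: `S⁻¹[X] = {a | ∃ x ∈ X, a S x}`. -/
def relPre {B₁ B₂ : Type*} (S : B₁ → B₂ → Prop) (X : Set B₂) : Set B₁ :=
  {a | ∃ x ∈ X, S a x}

/-- Relation composition: `a (T₂ ∘ T₁) c` iff `∃ b, a T₁ b ∧ b T₂ c`. -/
def relComp {B₁ B₂ B₃ : Type*} (T₂ : B₂ → B₃ → Prop) (T₁ : B₁ → B₂ → Prop) :
    B₁ → B₃ → Prop :=
  fun a c => ∃ b, T₁ a b ∧ T₂ b c

/-- Pointwise complement of a set: `¬X = {¬x | x ∈ X}`. -/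
def complSet {B : Type*} [BooleanAlgebra B] (X : Set B) : Set B := (·ᶜ) '' X

/-- A subordination between boolean algebras (axioms S1–S4). -/
structure IsSubord {B₁ B₂ : Type*} [BooleanAlgebra B₁] [BooleanAlgebra B₂]
    (T : B₁ → B₂ → Prop) : Prop where
  rel_bot : T ⊥ ⊥
  rel_top : T ⊤ ⊤
  sup_left : ∀ a b c, T a c → T b c → T (a ⊔ b) c
  inf_right : ∀ a c d, T a c → T a d → T a (c ⊓ d)
  mono : ∀ a b c d, a ≤ b → T b c → c ≤ d → T a d

/-- An S5-subordination on a boolean algebra (axioms S1–S7). -/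
structure IsS5Sub {B : Type*} [BooleanAlgebra B] (S : B → B → Prop)
    extends IsSubord S : Prop where
  le_of_rel : ∀ a b, S a b → a ≤ b
  compl_rel : ∀ a b, S a b → S bᶜ aᶜ
  dense : ∀ a b, S a b → ∃ c, S a c ∧ S c b

/-- A compatible subordination between S5-subordination algebras. -/
def IsCompat {B₁ B₂ : Type*} [BooleanAlgebra B₁] [BooleanAlgebra B₂]
    (S₁ : B₁ → B₁ → Prop) (S₂ : B₂ → B₂ → Prop) (T : B₁ → B₂ → Prop) : Prop :=
  IsSubord T ∧ relComp S₂ T = T ∧ relComp T S₁ = T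

/-- Ideal of a boolean algebra (as a set). -/
def IsIdeal {B : Type*} [BooleanAlgebra B] (I : Set B) : Prop :=
  ⊥ ∈ I ∧ (∀ a b : B, a ≤ b → b ∈ I → a ∈ I) ∧ (∀ a b : B, a ∈ I → b ∈ I → a ⊔ b ∈ I)

/-- Round ideal: an ideal with `I = S⁻¹[I]`. -/
def IsRoundIdeal {B : Type*} [BooleanAlgebra B] (S : B → B → Prop) (I : Set B) : Prop :=
  IsIdeal I ∧ relPre S I = I

/-- The ideal generated by a set: intersection of all ideals containing it. -/
def idealGen {B : Type*} [BooleanAlgebra B] (X : Set B) : Set B :=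
  ⋂₀ {J | IsIdeal J ∧ X ⊆ J}

/-- The pseudocomplement of a round ideal: `I* = ¬S[U(I)]`. -/
def pstar {B : Type*} [BooleanAlgebra B] (S : B → B → Prop) (I : Set B) : Set B :=
  complSet (relImg S (upperBounds I))

/-- The well-inside relation on round ideals: `I ≺ J` iff `U(I) ∩ J ≠ ∅`. -/
def precR {B : Type*} [BooleanAlgebra B] (I J : Set B) : Prop :=
  (upperBounds I ∩ J).Nonempty

/-- Normal round ideal: a round ideal with `I = I**`. -/
def IsNormalRoundIdeal {B : Type*} [BooleanAlgebra B] (S : B → B → Prop) (I : Set B) : Prop :=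
  IsRoundIdeal S I ∧ pstar S (pstar S I) = I

/-- The dual of a subordination: `b T̃ a` iff `¬a T ¬b`. -/
def relDual {B₁ B₂ : Type*} [BooleanAlgebra B₁] [BooleanAlgebra B₂]
    (T : B₁ → B₂ → Prop) : B₂ → B₁ → Prop :=
  fun b a => T aᶜ bᶜ

/-- Continuity of a compatible subordination. -/
def IsContinuousSub {B₁ B₂ : Type*} [BooleanAlgebra B₁] [BooleanAlgebra B₂]
    (S₁ : B₁ → B₁ → Prop) (S₂ : B₂ → B₂ → Prop) (T : B₁ → B₂ → Prop) : Prop :=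
  ∀ b₁ b₂, S₂ b₁ b₂ → ∃ a, relDual T b₁ a ∧ ∀ a', relDual T b₂ a' → S₁ a a'

/-- Functional subordination: `T̃ ∘ T ⊆ S₁` and `S₂ ⊆ T ∘ T̃`. -/
def IsFunctionalSub {B₁ B₂ : Type*} [BooleanAlgebra B₁] [BooleanAlgebra B₂]
    (S₁ : B₁ → B₁ → Prop) (S₂ : B₂ → B₂ → Prop) (T : B₁ → B₂ → Prop) : Prop :=
  (∀ a a', relComp (relDual T) T a a' → S₁ a a') ∧
  (∀ b b', S₂ b b' → relComp T (relDual T) b b')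

section Aux

variable {B : Type*} [BooleanAlgebra B] {S : B → B → Prop}

lemma s_bot' (hS : IsS5Sub S) (b : B) : S ⊥ b :=
  hS.mono ⊥ ⊥ ⊥ b le_rfl hS.rel_bot bot_le

lemma s_top' (hS : IsS5Sub S) (a : B) : S a ⊤ :=
  hS.mono a ⊤ ⊤ ⊤ le_top hS.rel_top le_rfl

lemma mem_pstar_iff {X : Set B} {x : B} :
    x ∈ pstar S X ↔ ∃ u ∈ upperBounds X, S u xᶜ := by
  simp only [pstar, complSet, relImg, Set.mem_image, Set.mem_setOf_eq]
  constructor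
  · rintro ⟨y, ⟨u, hu, huy⟩, rfl⟩
    exact ⟨u, hu, by simpa using huy⟩
  · rintro ⟨u, hu, h⟩
    exact ⟨xᶜ, ⟨u, hu, h⟩, compl_compl x⟩

lemma pstar_anti {X Y : Set B} (hXY : X ⊆ Y) : pstar S Y ⊆ pstar S X := by
  intro x hx
  obtain ⟨u, hu, h⟩ := mem_pstar_iff.1 hx
  exact mem_pstar_iff.2 ⟨u, fun z hz => hu (hXY hz), h⟩

lemma isRoundIdeal_pstar (hS : IsS5Sub S) (X : Set B) : IsRoundIdeal S (pstar S X) := by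
  refine ⟨⟨?_, ?_, ?_⟩, ?_⟩
  · exact mem_pstar_iff.2 ⟨⊤, fun z _ => le_top, by simpa using hS.rel_top⟩
  · intro a b hab hb
    obtain ⟨u, hu, h⟩ := mem_pstar_iff.1 hb
    exact mem_pstar_iff.2 ⟨u, hu, hS.mono u u bᶜ aᶜ le_rfl h (compl_le_compl hab)⟩
  · intro a b ha hb
    obtain ⟨u, hu, hu'⟩ := mem_pstar_iff.1 ha
    obtain ⟨v, hv, hv'⟩ := mem_pstar_iff.1 hb
    refine mem_pstar_iff.2 ⟨u ⊓ v, fun z hz => le_inf (hu hz) (hv hz), ?_⟩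
    have h1 : S (u ⊓ v) aᶜ := hS.mono _ u _ _ inf_le_left hu' le_rfl
    have h2 : S (u ⊓ v) bᶜ := hS.mono _ v _ _ inf_le_right hv' le_rfl
    have h3 := hS.inf_right _ _ _ h1 h2
    simpa [compl_sup] using h3
  · ext a
    simp only [relPre, Set.mem_setOf_eq]
    constructor
    · rintro ⟨w, hw, haw⟩
      obtain ⟨u, hu, h⟩ := mem_pstar_iff.1 hw
      have h1 : S wᶜ aᶜ := hS.compl_rel a w haw
      have h2 : u ≤ wᶜ := hS.le_of_rel u wᶜ h
      exact mem_pstar_iff.2 ⟨u, hu, hS.mono u wᶜ aᶜ aᶜ h2 h1 le_rfl⟩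
    · intro ha
      obtain ⟨u, hu, h⟩ := mem_pstar_iff.1 ha
      obtain ⟨d, hud, hda⟩ := hS.dense u aᶜ h
      refine ⟨dᶜ, mem_pstar_iff.2 ⟨u, hu, by simpa using hud⟩, ?_⟩
      have h4 := hS.compl_rel d aᶜ hda
      simpa using h4

lemma subset_pstar_pstar (hS : IsS5Sub S) {X : Set B} (hX : IsRoundIdeal S X) :
    X ⊆ pstar S (pstar S X) := by
  intro a ha
  have ha' : a ∈ relPre S X := by rw [hX.2]; exact ha
  obtain ⟨c, hcX, hac⟩ := ha'
  refine mem_pstar_iff.2 ⟨cᶜ, ?_, hS.compl_rel a c hac⟩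
  intro d hd
  obtain ⟨v, hv, hvd⟩ := mem_pstar_iff.1 hd
  have h1 : c ≤ dᶜ := le_trans (hv hcX) (hS.le_of_rel _ _ hvd)
  have h2 := compl_le_compl h1
  simpa using h2

lemma isNormal_pstar (hS : IsS5Sub S) {X : Set B} (hX : IsRoundIdeal S X) :
    IsNormalRoundIdeal S (pstar S X) := by
  refine ⟨isRoundIdeal_pstar hS X, Set.Subset.antisymm ?_ ?_⟩
  · exact pstar_anti (subset_pstar_pstar hS hX)
  · exact subset_pstar_pstar hS (isRoundIdeal_pstar hS X)

lemma pstar_univ' (hS : IsS5Sub S) : pstar S (Set.univ : Set B) = {⊥} := by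
  ext x
  simp only [Set.mem_singleton_iff]
  rw [mem_pstar_iff]
  constructor
  · rintro ⟨u, hu, h⟩
    have hu' : u = ⊤ := le_antisymm le_top (hu (Set.mem_univ ⊤))
    subst hu'
    have h1 : ⊤ ≤ xᶜ := hS.le_of_rel _ _ h
    have h2 : xᶜ = ⊤ := top_le_iff.1 h1
    exact compl_eq_top.1 h2
  · rintro rfl
    exact ⟨⊤, fun z _ => le_top, by simpa using hS.rel_top⟩

lemma pstar_bot' (hS : IsS5Sub S) : pstar S ({⊥} : Set B) = Set.univ := by
  ext x
  simp only [Set.mem_univ, iff_true]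
  exact mem_pstar_iff.2 ⟨⊥, fun z hz => by simp_all, s_bot' hS xᶜ⟩

lemma isRoundIdeal_bot' (hS : IsS5Sub S) : IsRoundIdeal S ({⊥} : Set B) := by
  refine ⟨⟨rfl, ?_, ?_⟩, ?_⟩
  · intro a b hab hb
    simp only [Set.mem_singleton_iff] at *
    subst hb; exact le_bot_iff.1 hab
  · intro a b ha hb; simp_all
  · ext a
    simp only [relPre, Set.mem_setOf_eq, Set.mem_singleton_iff]
    constructor
    · rintro ⟨x, rfl, hax⟩
      exact le_bot_iff.1 (hS.le_of_rel _ _ hax)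
    · rintro rfl
      exact ⟨⊥, rfl, hS.rel_bot⟩

lemma isRoundIdeal_univ' (hS : IsS5Sub S) : IsRoundIdeal S (Set.univ : Set B) := by
  refine ⟨⟨Set.mem_univ _, fun _ _ _ _ => Set.mem_univ _, fun _ _ _ _ => Set.mem_univ _⟩, ?_⟩
  ext a
  simp only [relPre, Set.mem_setOf_eq, Set.mem_univ, iff_true]
  exact ⟨⊤, trivial, s_top' hS a⟩

lemma isRoundIdeal_inter' (hS : IsS5Sub S) {I J : Set B}
    (hI : IsRoundIdeal S I) (hJ : IsRoundIdeal S J) : IsRoundIdeal S (I ∩ J) := by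
  obtain ⟨⟨hbI, hdI, hsI⟩, hrI⟩ := hI
  obtain ⟨⟨hbJ, hdJ, hsJ⟩, hrJ⟩ := hJ
  refine ⟨⟨⟨hbI, hbJ⟩, fun a b hab hb => ⟨hdI a b hab hb.1, hdJ a b hab hb.2⟩,
    fun a b ha hb => ⟨hsI a b ha.1 hb.1, hsJ a b ha.2 hb.2⟩⟩, ?_⟩
  ext a
  simp only [relPre, Set.mem_setOf_eq, Set.mem_inter_iff]
  constructor
  · rintro ⟨x, ⟨hxI, hxJ⟩, hax⟩
    constructor
    · rw [← hrI]; exact ⟨x, hxI, hax⟩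
    · rw [← hrJ]; exact ⟨x, hxJ, hax⟩
  · rintro ⟨haI, haJ⟩
    have h1 : a ∈ relPre S I := by rw [hrI]; exact haI
    have h2 : a ∈ relPre S J := by rw [hrJ]; exact haJ
    obtain ⟨b, hbI', hab⟩ := h1
    obtain ⟨c, hcJ', hac⟩ := h2
    exact ⟨b ⊓ c, ⟨hdI _ b inf_le_left hbI', hdJ _ c inf_le_right hcJ'⟩,
      hS.inf_right a b c hab hac⟩

lemma isRoundIdeal_principal' (hS : IsS5Sub S) (c : B) :
    IsRoundIdeal S {x | S x c} := by
  refine ⟨⟨s_bot' hS c, fun a b hab hb => hS.mono a b c c hab hb le_rfl,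
    fun a b ha hb => hS.sup_left a b c ha hb⟩, ?_⟩
  ext a
  simp only [relPre, Set.mem_setOf_eq]
  constructor
  · rintro ⟨x, hx, hax⟩
    exact hS.mono a x c c (hS.le_of_rel a x hax) hx le_rfl
  · intro h
    obtain ⟨d, h1, h2⟩ := hS.dense a c h
    exact ⟨d, h2, h1⟩

end Aux

/-- the relation `Q : B → NI(B)` given by `a Q I` iff `a ∈ I` is a
compatible subordination from `(B,S)` to `(NI(B), ≺)`. -/
theorem stmt10 {B : Type*} [BooleanAlgebra B] (S : B → B → Prop) (hS : IsS5Sub S) :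
    -- S1: `⊥ Q ⊥` and `⊤ Q ⊤` (bottom and top of NI(B) are `{⊥}` and `univ`)
    (IsNormalRoundIdeal S ({⊥} : Set B) ∧ (⊥ : B) ∈ ({⊥} : Set B)) ∧
    (IsNormalRoundIdeal S (Set.univ : Set B) ∧ (⊤ : B) ∈ (Set.univ : Set B)) ∧
    -- S2
    (∀ (a b : B) (I : Set B), IsNormalRoundIdeal S I → a ∈ I → b ∈ I → a ⊔ b ∈ I) ∧
    -- S3 (the meet in NI(B) is intersection)
    (∀ (a : B) (I J : Set B), IsNormalRoundIdeal S I → IsNormalRoundIdeal S J →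
      a ∈ I → a ∈ J → IsNormalRoundIdeal S (I ∩ J) ∧ a ∈ I ∩ J) ∧
    -- S4
    (∀ (a b : B) (I J : Set B), IsNormalRoundIdeal S I → IsNormalRoundIdeal S J →
      a ≤ b → b ∈ I → I ⊆ J → a ∈ J) ∧
    -- compatibility: Q ∘ S = Q and ≺ ∘ Q = Q
    (∀ (a : B) (I : Set B), IsNormalRoundIdeal S I →
      ((a ∈ I ↔ ∃ b, S a b ∧ b ∈ I) ∧
       (a ∈ I ↔ ∃ J : Set B, IsNormalRoundIdeal S J ∧ a ∈ J ∧ precR J I))) := by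
  refine ⟨⟨⟨isRoundIdeal_bot' hS, by rw [pstar_bot' hS, pstar_univ' hS]⟩, rfl⟩,
    ⟨⟨isRoundIdeal_univ' hS, by rw [pstar_univ' hS, pstar_bot' hS]⟩, Set.mem_univ _⟩,
    ?_, ?_, ?_, ?_⟩
  · intro a b I hI ha hb
    exact hI.1.1.2.2 a b ha hb
  · intro a I J hI hJ haI haJ
    refine ⟨⟨isRoundIdeal_inter' hS hI.1 hJ.1, ?_⟩, haI, haJ⟩
    refine Set.Subset.antisymm ?_ (subset_pstar_pstar hS (isRoundIdeal_inter' hS hI.1 hJ.1))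
    intro x hx
    constructor
    · rw [← hI.2]
      exact pstar_anti (pstar_anti (Set.inter_subset_left)) hx
    · rw [← hJ.2]
      exact pstar_anti (pstar_anti (Set.inter_subset_right)) hx
  · intro a b I J hI hJ hab hbI hIJ
    exact hJ.1.1.2.1 a b hab (hIJ hbI)
  · intro a I hI
    constructor
    · constructor
      · intro ha
        have ha' : a ∈ relPre S I := by rw [hI.1.2]; exact ha
        obtain ⟨b, hbI, hab⟩ := ha'
        exact ⟨b, hab, hbI⟩
      · rintro ⟨b, hab, hbI⟩
        rw [← hI.1.2]
        exact ⟨b, hbI, hab⟩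
    · constructor
      · intro ha
        have ha' : a ∈ relPre S I := by rw [hI.1.2]; exact ha
        obtain ⟨c, hcI, hac⟩ := ha'
        have hc' : c ∈ relPre S I := by rw [hI.1.2]; exact hcI
        obtain ⟨b, hbI, hcb⟩ := hc'
        -- J = double pseudocomplement of the principal round ideal at c
        refine ⟨pstar S (pstar S {x | S x c}),
          isNormal_pstar hS (isRoundIdeal_pstar hS _),
          subset_pstar_pstar hS (isRoundIdeal_principal' hS c) hac, ⟨b, ?_, hbI⟩⟩
        -- b is an upper bound of J
        intro d hd
        obtain ⟨v, hv, hvd⟩ := mem_pstar_iff.1 hd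
        have hbc : bᶜ ∈ pstar S {x | S x c} :=
          mem_pstar_iff.2 ⟨c, fun z hz => hS.le_of_rel z c hz, by simpa using hcb⟩
        have h1 : bᶜ ≤ dᶜ := le_trans (hv hbc) (hS.le_of_rel _ _ hvd)
        have h2 := compl_le_compl h1
        simpa using h2
      · rintro ⟨J, hJ, haJ, u, huUB, huI⟩
        exact hI.1.1.2.1 a u (huUB haJ) huI
end

section
/- Let L be a compact regular frame. The map f : L → RI(BL) given by f(a) = {b ∈ BL | b ≺ a} is a frame isomorphism, where BL is the booleanization of L with the restricted well-inside relation, and RI(BL) is the frame of round ideals of the S5-subordination algebra (BL, ≺). -/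
open Set

/-- Pseudocomplement in a frame. -/
def pc {L : Type*} [Order.Frame L] (a : L) : L := sSup {x | a ⊓ x = ⊥}

/-- The well-inside relation in a frame: `a ≺ b` iff `a* ⊔ b = ⊤`. -/
def wI {L : Type*} [Order.Frame L] (a b : L) : Prop := pc a ⊔ b = ⊤

/-- The booleanization of a frame: the set of its regular elements `a = a**`. -/
def Bool' (L : Type*) [Order.Frame L] : Set L := {a | pc (pc a) = a}

/-- A frame is regular if every element is the join of the elements well inside it. -/
def IsRegularFrame (L : Type*) [Order.Frame L] : Prop :=
  ∀ a : L, a = sSup {x | wI x a}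

/-- A preframe homomorphism preserves finite meets and directed joins. -/
def IsPreframeHom {L M : Type*} [Order.Frame L] [Order.Frame M] (f : L → M) : Prop :=
  f ⊤ = ⊤ ∧ (∀ a b : L, f (a ⊓ b) = f a ⊓ f b) ∧
    ∀ s : Set L, s.Nonempty → DirectedOn (· ≤ ·) s → f (sSup s) = sSup (f '' s)

/-- A frame homomorphism preserves arbitrary joins and finite meets. -/
def IsFrameHom {L M : Type*} [Order.Frame L] [Order.Frame M] (f : L → M) : Prop :=
  f ⊤ = ⊤ ∧ (∀ a b : L, f (a ⊓ b) = f a ⊓ f b) ∧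
    ∀ s : Set L, f (sSup s) = sSup (f '' s)

/-- Ideal of the booleanization of a frame (joins in the booleanization are
`pc (pc (a ⊔ b))`). -/
def IsBLIdeal {L : Type*} [Order.Frame L] (I : Set L) : Prop :=
  I ⊆ Bool' L ∧ ⊥ ∈ I ∧
  (∀ a ∈ Bool' L, ∀ b ∈ I, a ≤ b → a ∈ I) ∧
  (∀ a ∈ I, ∀ b ∈ I, pc (pc (a ⊔ b)) ∈ I)

/-- Round ideal of the S5-subordination algebra `(BL, ≺)`. -/
def IsBLRound {L : Type*} [Order.Frame L] (I : Set L) : Prop :=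
  IsBLIdeal I ∧ ∀ a ∈ I, ∃ b ∈ I, wI a b

section Aux

variable {L : Type*} [Order.Frame L]

/-- The pseudocomplement is the Heyting complement. -/
lemma pc_eq (a : L) : pc a = aᶜ := by
  apply le_antisymm
  · exact sSup_le fun x hx => le_compl_iff_disjoint_left.2 (disjoint_iff.2 hx)
  · exact le_sSup (by simp [disjoint_iff.1 (disjoint_compl_right (a := a)).symm])

lemma wI_iff (a b : L) : wI a b ↔ aᶜ ⊔ b = ⊤ := by rw [wI, pc_eq]

lemma le_pcpc (a : L) : a ≤ pc (pc a) := by rw [pc_eq, pc_eq]; exact le_compl_compl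

lemma pcpc_mem_Bool (a : L) : pc (pc a) ∈ Bool' L := by
  simp only [Bool', mem_setOf_eq, pc_eq, compl_compl_compl]

lemma bot_mem_Bool : (⊥ : L) ∈ Bool' L := by
  simp [Bool', pc_eq]

lemma wI_bot (a : L) : wI (⊥ : L) a := by
  rw [wI_iff]; simp

lemma wI_le {a b : L} (h : wI a b) : a ≤ b := by
  rw [wI_iff] at h
  calc a = a ⊓ (aᶜ ⊔ b) := by rw [h, inf_top_eq]
    _ = a ⊓ aᶜ ⊔ a ⊓ b := inf_sup_left a aᶜ b
    _ ≤ b := by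
        rw [disjoint_compl_right.eq_bot, bot_sup_eq]; exact inf_le_right

lemma wI_mono_right {a b c : L} (h : wI a b) (hbc : b ≤ c) : wI a c := by
  rw [wI_iff] at h ⊢
  exact top_le_iff.1 (h ▸ sup_le_sup_left hbc _)

lemma wI_anti_left {a b c : L} (hab : a ≤ b) (h : wI b c) : wI a c := by
  rw [wI_iff] at h ⊢
  exact top_le_iff.1 (h ▸ sup_le_sup_right (compl_anti hab) _)

lemma wI_pcpc_left {a b : L} (h : wI a b) : wI (pc (pc a)) b := by
  rw [wI_iff] at h ⊢
  rwa [pc_eq, pc_eq, compl_compl_compl]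

lemma wI_sup {a b c : L} (ha : wI a c) (hb : wI b c) : wI (a ⊔ b) c := by
  rw [wI_iff] at ha hb ⊢
  rw [compl_sup, sup_inf_right, ha, hb, inf_top_eq]

/-- Key compactness step. -/
lemma key (hc : IsCompactElement (⊤ : L)) {b : L} {S : Set L}
    (hne : S.Nonempty) (hdir : DirectedOn (· ≤ ·) S) (h : wI b (sSup S)) :
    ∃ x ∈ S, wI b x := by
  rw [wI_iff] at h
  set s : Set L := (fun x => bᶜ ⊔ x) '' S with hs
  have hsne : s.Nonempty := hne.image _
  have hsdir : DirectedOn (· ≤ ·) s := by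
    rintro _ ⟨x, hx, rfl⟩ _ ⟨y, hy, rfl⟩
    obtain ⟨z, hz, hxz, hyz⟩ := hdir x hx y hy
    exact ⟨bᶜ ⊔ z, mem_image_of_mem _ hz, sup_le_sup_left hxz _, sup_le_sup_left hyz _⟩
  have hle : (⊤ : L) ≤ sSup s := by
    rw [← h]
    apply sup_le
    · obtain ⟨x₀, hx₀⟩ := hne
      exact le_trans le_sup_left (le_sSup (mem_image_of_mem _ hx₀))
    · exact sSup_le fun x hx => le_trans le_sup_right (le_sSup (mem_image_of_mem _ hx))
  obtain ⟨y, hy, hty⟩ :=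
    (CompleteLattice.isCompactElement_iff_le_of_directed_sSup_le L ⊤).1 hc s hsne hsdir hle
  obtain ⟨x, hx, rfl⟩ := hy
  exact ⟨x, hx, (wI_iff _ _).2 (top_le_iff.1 hty)⟩

end Aux

/-- for a compact regular frame `L`, the map
`f(a) = {b ∈ BL | b ≺ a}` is a frame isomorphism from `L` onto the frame of
round ideals of `(BL, ≺)` (an order isomorphism onto the round ideals). -/
theorem stmt14 {L : Type*} [Order.Frame L]
    (hc : IsCompactElement (⊤ : L)) (hr : IsRegularFrame L) :
    (∀ a : L, IsBLRound {b : L | b ∈ Bool' L ∧ wI b a}) ∧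
    (∀ a b : L, a ≤ b ↔
      {x : L | x ∈ Bool' L ∧ wI x a} ⊆ {x : L | x ∈ Bool' L ∧ wI x b}) ∧
    (∀ I : Set L, IsBLRound I → ∃ a : L, {x : L | x ∈ Bool' L ∧ wI x a} = I) := by
  refine ⟨?_, ?_, ?_⟩
  · intro a
    constructor
    · refine ⟨fun b hb => hb.1, ⟨bot_mem_Bool, wI_bot a⟩, ?_, ?_⟩
      · exact fun x hx b hb hle => ⟨hx, wI_anti_left hle hb.2⟩
      · exact fun x hx y hy => ⟨pcpc_mem_Bool _, wI_pcpc_left (wI_sup hx.2 hy.2)⟩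
    · rintro b ⟨hbB, hba⟩
      have hdir : DirectedOn (· ≤ ·) {x : L | wI x a} :=
        fun x hx y hy => ⟨x ⊔ y, wI_sup hx hy, le_sup_left, le_sup_right⟩
      have hne : ({x : L | wI x a}).Nonempty := ⟨⊥, wI_bot a⟩
      have hba' : wI b (sSup {x : L | wI x a}) := (hr a) ▸ hba
      obtain ⟨x, hx, hbx⟩ := key hc hne hdir hba'
      exact ⟨pc (pc x), ⟨pcpc_mem_Bool x, wI_pcpc_left hx⟩,
        wI_mono_right hbx (le_pcpc x)⟩
  · intro a b
    constructor
    · exact fun h x hx => ⟨hx.1, wI_mono_right hx.2 h⟩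
    · intro h
      rw [hr a]
      refine sSup_le fun x hx => ?_
      have hxx : pc (pc x) ∈ {y : L | y ∈ Bool' L ∧ wI y b} :=
        h ⟨pcpc_mem_Bool x, wI_pcpc_left hx⟩
      exact le_trans (le_pcpc x) (wI_le hxx.2)
  · rintro I ⟨⟨hIB, hbot, hdown, hjoin⟩, hround⟩
    refine ⟨sSup I, Set.eq_of_subset_of_subset ?_ ?_⟩
    · rintro x ⟨hxB, hxw⟩
      have hdir : DirectedOn (· ≤ ·) I := by
        intro u hu v hv
        refine ⟨pc (pc (u ⊔ v)), hjoin u hu v hv, ?_, ?_⟩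
        · exact le_trans le_sup_left (le_pcpc _)
        · exact le_trans le_sup_right (le_pcpc _)
      obtain ⟨y, hy, hxy⟩ := key hc ⟨⊥, hbot⟩ hdir hxw
      exact hdown x hxB y hy (wI_le hxy)
    · intro b hb
      obtain ⟨c, hcI, hbc⟩ := hround b hb
      exact ⟨hIB hb, wI_mono_right hbc (le_sSup hcI)⟩
end

section
/- Let T : (B₁,S₁) → (B₂,S₂) be a functional compatible subordination between S5-subordination algebras. Then the preframe homomorphism RI(T) : RI(B₂) → RI(B₁), I ↦ T⁻¹[I], preserves the bottom element and binary joins of round ideals, hence is a frame homomorphism. -/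
open Set

lemma isIdeal_idealGen {B : Type*} [BooleanAlgebra B] (X : Set B) : IsIdeal (idealGen X) := by
  refine ⟨?_, ?_, ?_⟩
  · intro J hJ; exact hJ.1.1
  · intro a b hab hb J hJ; exact hJ.1.2.1 a b hab (hb J hJ)
  · intro a b ha hb J hJ; exact hJ.1.2.2 a b (ha J hJ) (hb J hJ)

lemma subset_idealGen {B : Type*} [BooleanAlgebra B] (X : Set B) : X ⊆ idealGen X := by
  intro x hx J hJ; exact hJ.2 hx

lemma idealGen_subset {B : Type*} [BooleanAlgebra B] {X J : Set B}
    (hJ : IsIdeal J) (h : X ⊆ J) : idealGen X ⊆ J := by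
  intro x hx; exact hx J ⟨hJ, h⟩

lemma isIdeal_relPre {B₁ B₂ : Type*} [BooleanAlgebra B₁] [BooleanAlgebra B₂]
    {T : B₁ → B₂ → Prop} (hT : IsSubord T) {K : Set B₂} (hK : IsIdeal K) :
    IsIdeal (relPre T K) := by
  refine ⟨⟨⊥, hK.1, hT.rel_bot⟩, ?_, ?_⟩
  · rintro a b hab ⟨k, hk, hbk⟩
    exact ⟨k, hk, hT.mono a b k k hab hbk le_rfl⟩
  · rintro a b ⟨k, hk, hak⟩ ⟨k', hk', hbk'⟩
    refine ⟨k ⊔ k', hK.2.2 k k' hk hk', hT.sup_left a b (k ⊔ k') ?_ ?_⟩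
    · exact hT.mono a a k (k ⊔ k') le_rfl hak le_sup_left
    · exact hT.mono b b k' (k ⊔ k') le_rfl hbk' le_sup_right

lemma mem_idealGen_union {B : Type*} [BooleanAlgebra B] {I J : Set B}
    (hI : IsIdeal I) (hJ : IsIdeal J) {c : B} (hc : c ∈ idealGen (I ∪ J)) :
    ∃ i ∈ I, ∃ j ∈ J, c ≤ i ⊔ j := by
  have hK : IsIdeal {c : B | ∃ i ∈ I, ∃ j ∈ J, c ≤ i ⊔ j} := by
    refine ⟨⟨⊥, hI.1, ⊥, hJ.1, bot_le⟩, ?_, ?_⟩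
    · rintro a b hab ⟨i, hi, j, hj, hb⟩
      exact ⟨i, hi, j, hj, hab.trans hb⟩
    · rintro a b ⟨i, hi, j, hj, ha⟩ ⟨i', hi', j', hj', hb⟩
      refine ⟨i ⊔ i', hI.2.2 i i' hi hi', j ⊔ j', hJ.2.2 j j' hj hj', ?_⟩
      calc a ⊔ b ≤ (i ⊔ j) ⊔ (i' ⊔ j') := sup_le_sup ha hb
        _ = (i ⊔ i') ⊔ (j ⊔ j') := sup_sup_sup_comm i j i' j'
  refine hc _ ⟨hK, ?_⟩
  rintro x (hx | hx)
  · exact ⟨x, hx, ⊥, hJ.1, le_sup_left⟩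
  · exact ⟨⊥, hI.1, x, hx, le_sup_right⟩

/-- for a functional compatible subordination `T`, the preframe
homomorphism `I ↦ T⁻¹[I]` on round ideals preserves the bottom element and
binary joins, hence is a frame homomorphism. -/
theorem stmt18 {B₁ B₂ : Type*} [BooleanAlgebra B₁] [BooleanAlgebra B₂]
    (S₁ : B₁ → B₁ → Prop) (S₂ : B₂ → B₂ → Prop)
    (hS₁ : IsS5Sub S₁) (hS₂ : IsS5Sub S₂)
    (T : B₁ → B₂ → Prop) (hT : IsCompat S₁ S₂ T)
    (hf : IsFunctionalSub S₁ S₂ T) :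
    relPre T ({⊥} : Set B₂) = ({⊥} : Set B₁) ∧
    (∀ I J : Set B₂, IsRoundIdeal S₂ I → IsRoundIdeal S₂ J →
      relPre T (idealGen (I ∪ J)) = idealGen (relPre T I ∪ relPre T J)) := by
  obtain ⟨hTsub, hc1, hc2⟩ := hT
  obtain ⟨hf1, hf2⟩ := hf
  constructor
  · ext a
    simp only [relPre, Set.mem_setOf_eq, Set.mem_singleton_iff]
    constructor
    · rintro ⟨x, rfl, hax⟩
      have haT : T a ⊤ := hTsub.mono a ⊤ ⊤ ⊤ le_top hTsub.rel_top le_rfl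
      have hS : S₁ a aᶜ := hf1 a aᶜ ⟨⊥, hax, by simpa [relDual] using haT⟩
      have hle : a ≤ aᶜ := hS₁.le_of_rel _ _ hS
      have : a ≤ ⊥ := by
        calc a = a ⊓ a := (inf_idem a).symm
          _ ≤ a ⊓ aᶜ := inf_le_inf_left a hle
          _ = ⊥ := inf_compl_eq_bot
      exact le_bot_iff.mp this
    · rintro rfl; exact ⟨⊥, rfl, hTsub.rel_bot⟩
  · intro I J hI hJ
    apply subset_antisymm
    · rintro a ⟨c, hc, hac⟩
      obtain ⟨i, hi, j, hj, hcij⟩ := mem_idealGen_union hI.1 hJ.1 hc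
      rw [← hI.2] at hi
      obtain ⟨i', hi', hii'⟩ := hi
      rw [← hJ.2] at hj
      obtain ⟨j', hj', hjj'⟩ := hj
      obtain ⟨a₁, ha₁d, ha₁⟩ := hf2 i i' hii'
      obtain ⟨a₂, ha₂d, ha₂⟩ := hf2 j j' hjj'
      have hTa : T a (i ⊔ j) := hTsub.mono a a c (i ⊔ j) le_rfl hac hcij
      have hTc : T (a₁ ⊔ a₂)ᶜ (i ⊔ j)ᶜ := by
        have h1 : T (a₁ᶜ ⊓ a₂ᶜ) iᶜ :=
          hTsub.mono _ a₁ᶜ iᶜ iᶜ inf_le_left ha₁d le_rfl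
        have h2 : T (a₁ᶜ ⊓ a₂ᶜ) jᶜ :=
          hTsub.mono _ a₂ᶜ jᶜ jᶜ inf_le_right ha₂d le_rfl
        simpa [compl_sup] using hTsub.inf_right _ _ _ h1 h2
      have hS : S₁ a (a₁ ⊔ a₂) := hf1 a (a₁ ⊔ a₂) ⟨i ⊔ j, hTa, hTc⟩
      have hle : a ≤ a₁ ⊔ a₂ := hS₁.le_of_rel _ _ hS
      have hG := isIdeal_idealGen (relPre T I ∪ relPre T J)
      refine hG.2.1 a (a₁ ⊔ a₂) hle (hG.2.2 a₁ a₂ ?_ ?_)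
      · exact subset_idealGen _ (Or.inl ⟨i', hi', ha₁⟩)
      · exact subset_idealGen _ (Or.inr ⟨j', hj', ha₂⟩)
    · apply idealGen_subset (isIdeal_relPre hTsub (isIdeal_idealGen (I ∪ J)))
      rintro x (⟨b, hb, hxb⟩ | ⟨b, hb, hxb⟩)
      · exact ⟨b, subset_idealGen _ (Or.inl hb), hxb⟩
      · exact ⟨b, subset_idealGen _ (Or.inr hb), hxb⟩
end
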